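/- Let c > 0, a ∈ ℝ, and let g : [s, t] → ℝ be continuous and satisfy g(s₂) − g(s₁) ≤ ∫_{s₁}^{s₂} (a − c·g(σ)) dσ for all s ≤ s₁ ≤ s₂ ≤ t. Then g(s₂) ≤ e^{−c(s₂−s₁)} g(s₁) + (a/c)(1 − e^{−c(s₂−s₁)}) for all s ≤ s₁ ≤ s₂ ≤ t; in particular g(s₂) ≤ max(g(s₁), a/c). -/

import Mathlib

open MeasureTheory intervalIntegral Set

theorem stmt_7 (s t a c : ℝ) (hc : 0 < c) (g : ℝ → ℝ)
    (hg : ContinuousOn g (Set.Icc s t))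
    (hint : ∀ s₁ s₂, s ≤ s₁ → s₁ ≤ s₂ → s₂ ≤ t →
      g s₂ - g s₁ ≤ ∫ σ in s₁..s₂, (a - c * g σ)) :
    ∀ s₁ s₂, s ≤ s₁ → s₁ ≤ s₂ → s₂ ≤ t →
      g s₂ ≤ Real.exp (-c * (s₂ - s₁)) * g s₁ +
        (a / c) * (1 - Real.exp (-c * (s₂ - s₁))) ∧
      g s₂ ≤ max (g s₁) (a / c) := by
  intro s₁ s₂ hs1 h12 h2t
  set f : ℝ → ℝ := fun σ => a - c * g σ with hf
  have hfc : ContinuousOn f (Set.Icc s t) :=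
    continuousOn_const.sub (continuousOn_const.mul hg)
  have hsub : Set.Icc s₁ s₂ ⊆ Set.Icc s t := Set.Icc_subset_Icc hs1 h2t
  have hintgr : ∀ r₁ ∈ Set.Icc s₁ s₂, ∀ r₂ ∈ Set.Icc s₁ s₂,
      IntervalIntegrable f volume r₁ r₂ := by
    intro r₁ hr₁ r₂ hr₂
    apply (hfc.mono ?_).intervalIntegrable
    exact (Set.uIcc_subset_Icc hr₁ hr₂).trans hsub
  -- v r = g s₂ + ∫ s₂..r f
  set v : ℝ → ℝ := fun r => g s₂ + ∫ σ in s₂..r, f σ with hv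
  have hvle : ∀ r ∈ Set.Icc s₁ s₂, v r ≤ g r := by
    intro r hr
    have := hint r s₂ (hs1.trans hr.1) hr.2 h2t
    have hswap : (∫ σ in s₂..r, f σ) = -∫ σ in r..s₂, f σ :=
      intervalIntegral.integral_symm _ _
    simp only [hv, hswap]
    linarith
  have hvs2 : v s₂ = g s₂ := by simp [hv]
  -- continuity of v on [s₁, s₂]
  have hvcont : ContinuousOn v (Set.Icc s₁ s₂) := by
    apply continuousOn_const.add
    have : Set.Icc s₁ s₂ ⊆ Set.uIcc s₁ s₂ := by
      rw [Set.uIcc_of_le h12]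
    apply (intervalIntegral.continuousOn_primitive_interval'
      (hintgr s₁ (Set.left_mem_Icc.2 h12) s₂ (Set.right_mem_Icc.2 h12))
      (by rw [Set.uIcc_of_le h12]; exact Set.right_mem_Icc.2 h12)).mono this
  -- derivative of v at interior points
  have hvderiv : ∀ r ∈ Set.Ioo s₁ s₂, HasDerivAt v (f r) r := by
    intro r hr
    have hrmem : r ∈ Set.Ioo s t := ⟨lt_of_le_of_lt hs1 hr.1, lt_of_lt_of_le hr.2 h2t⟩
    have hca : ContinuousAt f r := by
      have : ContinuousAt g r := hg.continuousAt (Icc_mem_nhds hrmem.1 hrmem.2)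
      exact continuousAt_const.sub (continuousAt_const.mul this)
    have hii : IntervalIntegrable f volume s₂ r :=
      (hintgr s₂ (Set.right_mem_Icc.2 h12) r ⟨hr.1.le, hr.2.le⟩)
    have hmeas : StronglyMeasurableAtFilter f (nhds r) :=
      ContinuousOn.stronglyMeasurableAtFilter isOpen_Ioo
        (hfc.mono Set.Ioo_subset_Icc_self) r hrmem
    exact (intervalIntegral.integral_hasDerivAt_right hii hmeas hca).const_add _
  -- φ r = (v r - a/c) * exp (c r)
  set φ : ℝ → ℝ := fun r => (v r - a / c) * Real.exp (c * r) with hφ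
  have hφderiv : ∀ r ∈ Set.Ioo s₁ s₂,
      HasDerivAt φ ((c * (v r - g r)) * Real.exp (c * r)) r := by
    intro r hr
    have h1 : HasDerivAt (fun r => v r - a / c) (f r) r := (hvderiv r hr).sub_const _
    have h2 : HasDerivAt (fun r => Real.exp (c * r)) (c * Real.exp (c * r)) r := by
      simpa [mul_comm] using ((hasDerivAt_id r).const_mul c).exp
    have := h1.mul h2
    convert this using 1
    show c * (v r - g r) * Real.exp (c * r) = (a - c * g r) * Real.exp (c * r) + (v r - a / c) * (c * Real.exp (c * r))
    field_simp
    ring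
    all_goals rfl
  have hφanti : AntitoneOn φ (Set.Icc s₁ s₂) := by
    apply antitoneOn_of_deriv_nonpos (convex_Icc s₁ s₂)
    · exact (hvcont.sub continuousOn_const).mul
        (Real.continuous_exp.comp (continuous_const.mul continuous_id)).continuousOn
    · intro r hr
      rw [interior_Icc] at hr
      exact (hφderiv r hr).differentiableAt.differentiableWithinAt
    · intro r hr
      rw [interior_Icc] at hr
      rw [(hφderiv r hr).deriv]
      have h1 : v r ≤ g r := hvle r ⟨hr.1.le, hr.2.le⟩
      have h2 := (Real.exp_pos (c * r)).le
      have h3 : c * (v r - g r) ≤ 0 := by nlinarith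
      exact mul_nonpos_of_nonpos_of_nonneg h3 h2
  have hkey : (g s₂ - a / c) * Real.exp (c * s₂) ≤ (g s₁ - a / c) * Real.exp (c * s₁) := by
    have h1 : φ s₂ ≤ φ s₁ :=
      hφanti (Set.left_mem_Icc.2 h12) (Set.right_mem_Icc.2 h12) h12
    have h2 : v s₁ ≤ g s₁ := hvle s₁ (Set.left_mem_Icc.2 h12)
    have := Real.exp_pos (c * s₁)
    simp only [hφ, hvs2] at h1
    nlinarith [mul_le_mul_of_nonneg_right (sub_le_sub_right h2 (a / c))
      (Real.exp_pos (c * s₁)).le]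
  have hexp1 : Real.exp (-c * (s₂ - s₁)) * Real.exp (c * s₂) = Real.exp (c * s₁) := by
    rw [← Real.exp_add]; ring_nf
  have hmain : g s₂ ≤ Real.exp (-c * (s₂ - s₁)) * g s₁ +
      (a / c) * (1 - Real.exp (-c * (s₂ - s₁))) := by
    have he2 : (0:ℝ) < Real.exp (c * s₂) := Real.exp_pos _
    have h3 : (g s₂ - a / c) * Real.exp (c * s₂) ≤
        ((g s₁ - a / c) * Real.exp (-c * (s₂ - s₁))) * Real.exp (c * s₂) := by
      calc (g s₂ - a / c) * Real.exp (c * s₂) ≤ (g s₁ - a / c) * Real.exp (c * s₁) := hkey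
        _ = ((g s₁ - a / c) * Real.exp (-c * (s₂ - s₁))) * Real.exp (c * s₂) := by
            rw [mul_assoc, hexp1]
    have h4 := le_of_mul_le_mul_right h3 he2
    nlinarith [h4]
  refine ⟨hmain, ?_⟩
  have hθ1 : Real.exp (-c * (s₂ - s₁)) ≤ 1 := by
    rw [Real.exp_le_one_iff]
    nlinarith
  have hθ0 : (0:ℝ) < Real.exp (-c * (s₂ - s₁)) := Real.exp_pos _
  have h1 := le_max_left (g s₁) (a / c)
  have h2 := le_max_right (g s₁) (a / c)
  nlinarith [mul_le_mul_of_nonneg_left h1 hθ0.le,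
    mul_le_mul_of_nonneg_left h2 (by linarith : (0:ℝ) ≤ 1 - Real.exp (-c * (s₂ - s₁)))]
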